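/- Let K = ℚ(ζ₈) be the 8th cyclotomic field with ring of integers ℤ_K, t = ζ₈, and let 𝔫 be the ideal of ℤ_K generated by -t³ - t - 6. Then the congruence subgroup Γ₀(𝔫) ≤ GL₂(ℤ_K) contains no element of order 3; that is, every g ∈ Γ₀(𝔫) with g³ = 1 satisfies g = 1. -/

import Mathlib

open Matrix NumberField

/-- The congruence subgroup `Γ₀(I)` of `GL₂(R)`: invertible `2 × 2` matrices over `R`
whose lower-left entry lies in the ideal `I`. -/
def Gamma0 {R : Type*} [CommRing R] (I : Ideal R) : Subgroup (GL (Fin 2) R) where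
  carrier := { g | (g : Matrix (Fin 2) (Fin 2) R) 1 0 ∈ I }
  one_mem' := by
    simp [Matrix.one_apply_ne (show (1 : Fin 2) ≠ 0 by decide)]
  mul_mem' := by
    intro a b ha hb
    simp only [Set.mem_setOf_eq, Units.val_mul, Matrix.mul_apply, Fin.sum_univ_two] at *
    exact add_mem (I.mul_mem_right _ ha) (I.mul_mem_left _ hb)
  inv_mem' := by
    intro a ha
    simp only [Set.mem_setOf_eq] at *
    rw [Matrix.coe_units_inv, Matrix.inv_def, Matrix.adjugate_fin_two, Matrix.smul_apply]
    have h10 : (!![(a : Matrix (Fin 2) (Fin 2) R) 1 1, -(a : Matrix (Fin 2) (Fin 2) R) 0 1;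
        -(a : Matrix (Fin 2) (Fin 2) R) 1 0, (a : Matrix (Fin 2) (Fin 2) R) 0 0]) 1 0
        = -((a : Matrix (Fin 2) (Fin 2) R) 1 0) := by simp
    rw [h10, smul_eq_mul, mul_neg]
    exact I.neg_mem (I.mul_mem_left _ ha)


open Polynomial in
private lemma exists_phi (t : 𝓞 (CyclotomicField 8 ℚ)) (ht : IsPrimitiveRoot t 8) :
    ∃ φ : 𝓞 (CyclotomicField 8 ℚ) →+* ZMod 2, φ t = 1 := by
  set K := CyclotomicField 8 ℚ
  have hinj : Function.Injective (algebraMap (𝓞 K) K) := RingOfIntegers.coe_injective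
  have hζ : IsPrimitiveRoot (algebraMap (𝓞 K) K t) 8 := ht.map_of_injective hinj
  have h8 : ((2:ℕ)^3 : ℕ) = 8 := rfl
  have hζ' : IsPrimitiveRoot (algebraMap (𝓞 K) K t) ((2:ℕ)^3 : ℕ) := by
    rw [h8]; exact hζ
  have : IsCyclotomicExtension {(2:ℕ)^3} ℚ K := by
    rw [h8]; haveI : NeZero ((8:ℕ):ℚ) := ⟨by norm_num⟩
    exact CyclotomicField.isCyclotomicExtension (n := 8) (K := ℚ)
  let pb := hζ'.integralPowerBasis
  have hgen : pb.gen = t := by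
    rw [IsPrimitiveRoot.integralPowerBasis_gen]
    exact Subtype.ext rfl
  have hmin : minpoly ℤ pb.gen = cyclotomic 8 ℤ := by
    rw [hgen]
    have : minpoly ℤ t = minpoly ℤ (algebraMap (𝓞 K) K t) :=
      (minpoly.algebraMap_eq hinj t).symm
    rw [this]; exact (cyclotomic_eq_minpoly hζ (by norm_num)).symm
  have hy : (aeval (1 : ZMod 2)) (minpoly ℤ pb.gen) = 0 := by
    rw [hmin]
    have := Polynomial.eval_one_cyclotomic_prime_pow (R := ZMod 2) (p := 2) 2
    rw [aeval_def, eval₂_eq_eval_map, map_cyclotomic]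
    norm_num at this ⊢
    exact this
  exact ⟨(pb.lift (1 : ZMod 2) hy).toRingHom, by simpa [hgen] using pb.lift_gen (1 : ZMod 2) hy⟩

/-- In `K = ℚ(ζ_8)` with ring of integers `ℤ_K`, `t = ζ_8` and `𝔫 = (-t ^ 3 - t - 6)`,
the congruence subgroup `Γ₀(𝔫) ≤ GL₂(ℤ_K)` contains no element of order `3`:
every `g ∈ Γ₀(𝔫)` with `g³ = 1` satisfies `g = 1`. -/
theorem no_order_three (t : 𝓞 (CyclotomicField 8 ℚ)) (ht : IsPrimitiveRoot t 8) :
    ∀ g ∈ Gamma0 (Ideal.span {(-t ^ 3 - t - 6 : 𝓞 (CyclotomicField 8 ℚ))}),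
      g ^ 3 = 1 → g = 1 := by
  obtain ⟨φ, hφt⟩ := exists_phi t ht
  have key : ∀ y : ZMod 2, y ^ 2 + y + 1 ≠ 0 := by decide
  have hcube : ∀ x : 𝓞 (CyclotomicField 8 ℚ), x ^ 3 = 1 → x = 1 := by
    intro x hx
    have hfac : (x - 1) * (x ^ 2 + x + 1) = 0 := by linear_combination hx
    rcases mul_eq_zero.mp hfac with h | h
    · exact sub_eq_zero.mp h
    · exfalso
      have h2 := congrArg φ h
      simp only [map_add, _root_.map_mul, map_pow, _root_.map_one, map_zero, hφt] at h2
      exact key (φ x) h2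
  set n : 𝓞 (CyclotomicField 8 ℚ) := -t ^ 3 - t - 6 with hndef
  have hn : φ n = 0 := by
    have : φ n = -(φ t) ^ 3 - φ t - 6 := by
      rw [hndef]; push_cast [map_sub, map_neg, map_pow, map_ofNat]; ring
    rw [this, hφt]; decide
  intro g hg h3
  have hM : (g : Matrix (Fin 2) (Fin 2) (𝓞 (CyclotomicField 8 ℚ))) ^ 3 = 1 := by
    rw [← Units.val_pow_eq_pow_val, h3, Units.val_one]
  set M := (g : Matrix (Fin 2) (Fin 2) (𝓞 (CyclotomicField 8 ℚ))) with hMdef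
  set a := M 0 0; set b := M 0 1; set c := M 1 0; set d := M 1 1
  have hgmem : c ∈ Ideal.span {n} := hg
  obtain ⟨m, hm⟩ := Ideal.mem_span_singleton.mp hgmem
  have hc : φ c = 0 := by rw [hm, _root_.map_mul, hn, zero_mul]
  have h00 := congrFun (congrFun hM 0) 0
  have h01 := congrFun (congrFun hM 0) 1
  have h10 := congrFun (congrFun hM 1) 0
  have h11 := congrFun (congrFun hM 1) 1
  simp only [pow_succ, pow_zero, one_mul, Matrix.mul_apply, Fin.sum_univ_two,
    Matrix.one_apply] at h00 h01 h10 h11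
  norm_num at h00 h01 h10 h11
  have nosol : ∀ x : 𝓞 (CyclotomicField 8 ℚ), x ^ 2 + x + 1 ≠ -(b * c) := by
    intro x hx
    have h := congrArg φ hx
    simp only [map_add, _root_.map_mul, map_pow, _root_.map_one, map_neg, hc, mul_zero,
      neg_zero] at h
    exact key (φ x) h
  by_cases hS : a ^ 2 + a * d + d ^ 2 + b * c = 0
  · exfalso
    have htau : (-(a + d)) ^ 3 = 1 := by linear_combination h00 - (2*a + d) * hS
    have h1 := hcube _ htau
    have hd : d = -1 - a := by linear_combination -h1
    apply nosol a
    rw [hd] at hS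
    linear_combination hS
  · have hb : b = 0 := by
      rcases mul_eq_zero.mp (show b * (a ^ 2 + a * d + d ^ 2 + b * c) = 0 by
        linear_combination h01) with h | h
      · exact h
      · exact absurd h hS
    have hcc : c = 0 := by
      rcases mul_eq_zero.mp (show c * (a ^ 2 + a * d + d ^ 2 + b * c) = 0 by
        linear_combination h10) with h | h
      · exact h
      · exact absurd h hS
    have ha : a = 1 := hcube a (by linear_combination h00 - (2*a*b + b*d) * hcc)
    have hdd : d = 1 := hcube d (by linear_combination h11 - (a*b + 2*b*d) * hcc)
    have hM1 : M = 1 := by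
      ext i j
      fin_cases i <;> fin_cases j <;>
        simp only [Matrix.one_apply, Fin.isValue] <;> norm_num
      exacts [ha, hb, hcc, hdd]
    exact Units.ext hM1
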